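/- For every even natural number n, the alternating sum ∑_{k=0}^{n/2} (-1)^k C(n-k, k) equals 0 if n ≡ 2 mod 3, equals 1 if n ≡ 0 mod 3, and equals -1 if n ≡ 1 mod 3. -/

import Mathlib

private def gsum (n : ℕ) : ℤ :=
  ∑ k ∈ Finset.range (n + 1), (-1 : ℤ) ^ k * (n - k).choose k

private def vval (r : ℕ) : ℤ :=
  if r = 0 then 1 else if r = 1 then 1 else if r = 2 then 0
  else if r = 3 then -1 else if r = 4 then -1 else 0

private lemma gsum_rec (n : ℕ) : gsum (n + 2) = gsum (n + 1) - gsum n := by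
  have e1 : gsum (n + 2)
      = (∑ i ∈ Finset.range (n + 2), (-1 : ℤ) ^ (i + 1) * (n + 1 - i).choose (i + 1)) + 1 := by
    unfold gsum
    rw [Finset.sum_range_succ']
    have hc : ∀ i ∈ Finset.range (n + 2), (-1 : ℤ) ^ (i + 1) * ((n + 2 - (i + 1)).choose (i + 1) : ℤ)
        = (-1 : ℤ) ^ (i + 1) * ((n + 1 - i).choose (i + 1) : ℤ) := by
      intro i _
      rw [show n + 2 - (i + 1) = n + 1 - i from by omega]
    rw [Finset.sum_congr rfl hc]
    norm_num
  have e2 : gsum (n + 1)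
      = (∑ i ∈ Finset.range (n + 1), (-1 : ℤ) ^ (i + 1) * (n - i).choose (i + 1)) + 1 := by
    unfold gsum
    rw [Finset.sum_range_succ']
    have hc : ∀ i ∈ Finset.range (n + 1), (-1 : ℤ) ^ (i + 1) * ((n + 1 - (i + 1)).choose (i + 1) : ℤ)
        = (-1 : ℤ) ^ (i + 1) * ((n - i).choose (i + 1) : ℤ) := by
      intro i _
      rw [show n + 1 - (i + 1) = n - i from by omega]
    rw [Finset.sum_congr rfl hc]
    norm_num
  rw [e1, e2, Finset.sum_range_succ]
  have hz : ((n + 1 - (n + 1)).choose (n + 1 + 1) : ℤ) = 0 := by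
    simp [Nat.choose_eq_zero_of_lt]
  rw [hz]
  have hterm : ∀ i ∈ Finset.range (n + 1),
      (-1 : ℤ) ^ (i + 1) * (n + 1 - i).choose (i + 1)
        = (-1 : ℤ) ^ (i + 1) * (n - i).choose (i + 1) - (-1 : ℤ) ^ i * (n - i).choose i := by
    intro i hi
    simp only [Finset.mem_range] at hi
    have h1 : n + 1 - i = (n - i) + 1 := by omega
    rw [h1, Nat.choose_succ_succ]
    push_cast
    ring
  rw [Finset.sum_congr rfl hterm, Finset.sum_sub_distrib]
  unfold gsum
  ring

private lemma gsum_eq : ∀ n, gsum n = vval (n % 6) ∧ gsum (n + 1) = vval ((n + 1) % 6) := by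
  intro n
  induction n with
  | zero =>
    constructor <;> · unfold gsum vval; decide
  | succ n ih =>
    refine ⟨ih.2, ?_⟩
    rw [gsum_rec, ih.1, ih.2]
    have h : n % 6 = 0 ∨ n % 6 = 1 ∨ n % 6 = 2 ∨ n % 6 = 3 ∨ n % 6 = 4 ∨ n % 6 = 5 := by
      omega
    rcases h with h | h | h | h | h | h <;>
      simp [Nat.add_mod, h, vval]

theorem alternating_diagonal_sum (n : ℕ) (hn : Even n) :
    ∑ k ∈ Finset.range (n / 2 + 1), (-1 : ℤ) ^ k * (n - k).choose k =
      if n % 3 = 2 then 0 else if n % 3 = 0 then 1 else -1 := by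
  have hsum : ∑ k ∈ Finset.range (n / 2 + 1), (-1 : ℤ) ^ k * (n - k).choose k = gsum n := by
    unfold gsum
    apply Finset.sum_subset
    · intro x hx
      simp only [Finset.mem_range] at *
      omega
    · intro x hx hx'
      simp only [Finset.mem_range] at *
      have : n - x < x := by omega
      rw [Nat.choose_eq_zero_of_lt this]
      simp
  rw [hsum, (gsum_eq n).1]
  have h2 : n % 2 = 0 := Nat.even_iff.mp hn
  have h : n % 6 = 0 ∨ n % 6 = 2 ∨ n % 6 = 4 := by omega
  rcases h with h | h | h
  · rw [h, show n % 3 = 0 from by omega]; simp [vval]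
  · rw [h, show n % 3 = 2 from by omega]; simp [vval]
  · rw [h, show n % 3 = 1 from by omega]; simp [vval]
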